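/- arXiv:1409.0285 — 3 statements merged into one kernel-verified Lean document; each statement's English description precedes it below -/
import Mathlib

section
/- For every real number t ≥ 0, we have ln(1+t) ≥ t/(1+t) + (t²/(2(1+t)²))·(1 + (2/3)·ln(1+t)). -/
noncomputable def fAux : ℝ → ℝ := fun t =>
  Real.log (1 + t) - (t / (1 + t) + (t ^ 2 / (2 * (1 + t) ^ 2)) * (1 + (2 / 3) * Real.log (1 + t)))

lemma fAux_hasDerivAt (x : ℝ) (hx : (0:ℝ) < 1 + x) :
    HasDerivAt fAux (2 * x / (3 * (1 + x) ^ 3) * (x - Real.log (1 + x))) x := by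
  have hne : (1 + x) ≠ 0 := ne_of_gt hx
  have h1 : HasDerivAt (fun t : ℝ => Real.log (1 + t)) (1 / (1 + x)) x := by
    have := ((hasDerivAt_id x).const_add 1).log hne
    simpa using this
  have h2 : HasDerivAt (fun t : ℝ => t / (1 + t))
      ((1 * (1 + x) - x * 1) / (1 + x) ^ 2) x :=
    (hasDerivAt_id x).div ((hasDerivAt_id x).const_add 1) hne
  have hp : HasDerivAt (fun t : ℝ => 2 * (1 + t) ^ 2)
      (2 * ((2 : ℕ) * (1 + x) ^ 1 * 1)) x :=
    (((hasDerivAt_id x).const_add 1).pow 2).const_mul 2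
  have hden : 2 * (1 + x) ^ 2 ≠ 0 := by positivity
  have h3 : HasDerivAt (fun t : ℝ => t ^ 2 / (2 * (1 + t) ^ 2))
      (((2 : ℕ) * x ^ 1 * (2 * (1 + x) ^ 2) - x ^ 2 * (2 * ((2 : ℕ) * (1 + x) ^ 1 * 1))) /
        (2 * (1 + x) ^ 2) ^ 2) x :=
    (hasDerivAt_pow 2 x).div hp hden
  have h4 : HasDerivAt (fun t : ℝ => 1 + (2 / 3) * Real.log (1 + t))
      ((2 / 3) * (1 / (1 + x))) x := (h1.const_mul (2 / 3)).const_add 1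
  have h := h1.sub (h2.add (h3.mul h4))
  convert h using 1
  · rfl
  · rfl
  · rfl
  have hlog : Real.log (1 + x) ≤ x := by
    have := Real.log_le_sub_one_of_pos hx
    linarith
  push_cast
  field_simp
  ring

theorem log_one_add_lower_bound (t : ℝ) (ht : 0 ≤ t) :
    Real.log (1 + t) ≥ t / (1 + t) + (t ^ 2 / (2 * (1 + t) ^ 2)) * (1 + (2 / 3) * Real.log (1 + t)) := by
  have key : fAux 0 ≤ fAux t := by
    have hmono : MonotoneOn fAux (Set.Ici 0) := by
      apply monotoneOn_of_deriv_nonneg (convex_Ici 0)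
      · intro x hx
        have hx' : (0:ℝ) < 1 + x := by
          simp only [Set.mem_Ici] at hx; linarith
        exact ((fAux_hasDerivAt x hx').differentiableAt).continuousAt.continuousWithinAt
      · intro x hx
        rw [interior_Ici] at hx
        have hx' : (0:ℝ) < 1 + x := by
          simp only [Set.mem_Ioi] at hx; linarith
        exact ((fAux_hasDerivAt x hx').differentiableAt).differentiableWithinAt
      · intro x hx
        rw [interior_Ici] at hx
        simp only [Set.mem_Ioi] at hx
        have hx' : (0:ℝ) < 1 + x := by linarith
        rw [(fAux_hasDerivAt x hx').deriv]
        have hlog : Real.log (1 + x) ≤ x := by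
          have := Real.log_le_sub_one_of_pos hx'
          linarith
        have h1 : 0 ≤ 2 * x / (3 * (1 + x) ^ 3) := by positivity
        have h2 : 0 ≤ x - Real.log (1 + x) := by linarith
        positivity
    exact hmono (Set.self_mem_Ici) (Set.mem_Ici.mpr ht) ht
  have h0 : fAux 0 = 0 := by simp [fAux]
  have : 0 ≤ fAux t := by linarith
  unfold fAux at this
  linarith
end

section
/- For all real numbers x and y with y > 0 and x ≤ y, and any t > 0, one has e^{tx} ≤ 1 + t·x + ((e^{ty} − 1 − t·y)/y²)·x². -/
open Real

private lemma exp_le_quadratic_of_nonpos {a : ℝ} (ha : a ≤ 0) :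
    Real.exp a ≤ 1 + a + a ^ 2 / 2 := by
  have hf : ∀ u : ℝ, HasDerivAt (fun v : ℝ => 1 + v + v ^ 2 / 2 - Real.exp v)
      (1 + u - Real.exp u) u := by
    intro u
    have h1 : HasDerivAt (fun v : ℝ => 1 + v + v ^ 2 / 2) (1 + u) u := by
      have := ((hasDerivAt_id u).const_add 1).add
        (((hasDerivAt_pow 2 u)).div_const 2)
      refine this.congr_deriv ?_
      push_cast; ring
    exact h1.sub (Real.hasDerivAt_exp u)
  have hanti : Antitone (fun v : ℝ => 1 + v + v ^ 2 / 2 - Real.exp v) := by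
    apply antitone_of_deriv_nonpos
    · exact fun u => (hf u).differentiableAt
    · intro u
      rw [(hf u).deriv]
      have := Real.add_one_le_exp u
      linarith
  have h0 := hanti ha
  simp only [pow_two] at h0 ⊢
  norm_num at h0
  linarith

private lemma key_lemma {a b : ℝ} (hb : 0 < b) (hab : a ≤ b) :
    b ^ 2 * (Real.exp a - 1 - a) ≤ a ^ 2 * (Real.exp b - 1 - b) := by
  have hqb : 1 + b + b ^ 2 / 2 ≤ Real.exp b := Real.quadratic_le_exp_of_nonneg hb.le
  rcases le_or_gt a 0 with ha | ha
  · have h1 : Real.exp a - 1 - a ≤ a ^ 2 / 2 := by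
      have := exp_le_quadratic_of_nonpos ha; linarith
    calc b ^ 2 * (Real.exp a - 1 - a) ≤ b ^ 2 * (a ^ 2 / 2) := by
          apply mul_le_mul_of_nonneg_left h1 (by positivity)
      _ = a ^ 2 * (b ^ 2 / 2) := by ring
      _ ≤ a ^ 2 * (Real.exp b - 1 - b) := by
          apply mul_le_mul_of_nonneg_left (by linarith) (by positivity)
  · -- 0 < a ≤ b, use the power series
    have hexp : ∀ u : ℝ, HasSum (fun n : ℕ => u ^ (n + 2) / (Nat.factorial (n + 2) : ℝ))
        (Real.exp u - 1 - u) := by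
      intro u
      have h := NormedSpace.expSeries_div_hasSum_exp u
      rw [← Real.exp_eq_exp_ℝ] at h
      have h2 := (hasSum_nat_add_iff' (f := fun n : ℕ => u ^ n / (Nat.factorial n : ℝ)) 2).2 h
      simp only [Finset.sum_range_succ, Finset.sum_range_one] at h2
      norm_num at h2
      rw [sub_sub]; exact h2
    have hA := (hexp a).mul_left (b ^ 2)
    have hB := (hexp b).mul_left (a ^ 2)
    refine hasSum_le (fun n => ?_) hA hB
    have hpow : a ^ n ≤ b ^ n := pow_le_pow_left₀ ha.le hab n
    have hfac : (0:ℝ) < (Nat.factorial (n + 2) : ℝ) := by positivity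
    rw [mul_div_assoc', mul_div_assoc', div_le_div_iff_of_pos_right hfac]
    calc b ^ 2 * a ^ (n + 2) = (a ^ 2 * b ^ 2) * a ^ n := by ring
      _ ≤ (a ^ 2 * b ^ 2) * b ^ n := by
          apply mul_le_mul_of_nonneg_left hpow (by positivity)
      _ = a ^ 2 * b ^ (n + 2) := by ring

theorem exp_taylor_bound (x y t : ℝ) (hy : 0 < y) (hxy : x ≤ y) (ht : 0 < t) :
    Real.exp (t * x) ≤ 1 + t * x + ((Real.exp (t * y) - 1 - t * y) / y ^ 2) * x ^ 2 := by
  have hb : 0 < t * y := mul_pos ht hy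
  have hab : t * x ≤ t * y := mul_le_mul_of_nonneg_left hxy ht.le
  have hkey := key_lemma hb hab
  have hty2 : (0:ℝ) < (t * y) ^ 2 := by positivity
  have h1 : Real.exp (t * x) - 1 - t * x ≤
      (t * x) ^ 2 / (t * y) ^ 2 * (Real.exp (t * y) - 1 - t * y) := by
    rw [div_mul_eq_mul_div, le_div_iff₀ hty2]
    linarith [hkey]
  have h2 : (t * x) ^ 2 / (t * y) ^ 2 * (Real.exp (t * y) - 1 - t * y)
      = (Real.exp (t * y) - 1 - t * y) / y ^ 2 * x ^ 2 := by
    field_simp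
  linarith [h1, h2.symm.le, h2.le]
end

section
/- For all x, y > 0 and Bₙ > 0, the Bennett exponent satisfies: (Bₙ/(xy) + 1)·ln(1 + xy/Bₙ) ≥ 1 + (xy/(2(xy + Bₙ)))·(1 + (2/3)·ln(1 + xy/Bₙ)), and consequently x/y − (x/y)·(Bₙ/(xy)+1)·ln(1+xy/Bₙ) ≤ −(x²/(2(xy + Bₙ)))·(1 + (2/3)·ln(1 + xy/Bₙ)). -/
open Real Set

lemma mono_aux {f f' : ℝ → ℝ} (hd : ∀ s ∈ Set.Ici (1:ℝ), HasDerivAt f (f' s) s)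
    (hf' : ∀ s ∈ Set.Ici (1:ℝ), 0 ≤ f' s) (h0 : f 1 = 0) {s : ℝ} (hs : 1 ≤ s) : 0 ≤ f s := by
  have hm : MonotoneOn f (Set.Ici 1) := by
    apply monotoneOn_of_deriv_nonneg (convex_Ici 1)
    · exact fun x hx => (hd x hx).continuousAt.continuousWithinAt
    · intro x hx
      rw [interior_Ici] at hx
      exact (hd x (Set.Ioi_subset_Ici_self hx)).differentiableAt.differentiableWithinAt
    · intro x hx
      rw [interior_Ici] at hx
      rw [(hd x (Set.Ioi_subset_Ici_self hx)).deriv]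
      exact hf' x (Set.Ioi_subset_Ici_self hx)
  calc (0:ℝ) = f 1 := h0.symm
  _ ≤ f s := hm (by norm_num) hs hs

lemma H2_nonneg {s : ℝ} (hs : 1 ≤ s) :
    0 ≤ 4 * Real.log s + 2 / s + 1 / s ^ 2 - 3 := by
  apply mono_aux (f' := fun u => 4 / u - 2 / u ^ 2 - 2 / u ^ 3) ?_ ?_ (by norm_num) hs
  · intro u hu
    have hu0 : (0:ℝ) < u := lt_of_lt_of_le one_pos hu
    have h := (((Real.hasDerivAt_log hu0.ne').const_mul 4).add
        ((hasDerivAt_const u (2:ℝ)).div (hasDerivAt_id u) hu0.ne')).add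
        ((hasDerivAt_const u (1:ℝ)).div ((hasDerivAt_id u).pow 2) (pow_ne_zero 2 hu0.ne')) |>.sub_const 3
    refine h.congr_deriv ?_
    simp only [id, Pi.pow_apply]
    field_simp
    ring
  · intro u hu
    have hu1 : (1:ℝ) ≤ u := hu
    have hu0 : (0:ℝ) < u := lt_of_lt_of_le one_pos hu1
    have : 0 ≤ (4 * u ^ 2 - 2 * u - 2) / u ^ 3 :=
      div_nonneg (by nlinarith) (by positivity)
    calc (0:ℝ) ≤ (4 * u ^ 2 - 2 * u - 2) / u ^ 3 := this
    _ = 4 / u - 2 / u ^ 2 - 2 / u ^ 3 := by field_simp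

lemma H1_nonneg {s : ℝ} (hs : 1 ≤ s) :
    0 ≤ (4 * s + 2) * Real.log s + (2 * s ^ 2 + 2 * s - 1) / s - 9 * s + 6 := by
  apply mono_aux (f' := fun u => 4 * Real.log u + 2 / u + 1 / u ^ 2 - 3) ?_ ?_ (by norm_num) hs
  · intro u hu
    have hu0 : (0:ℝ) < u := lt_of_lt_of_le one_pos hu
    have h := (((((hasDerivAt_id u).const_mul 4).add_const 2).mul
          (Real.hasDerivAt_log hu0.ne')).add
        (((((hasDerivAt_id u).pow 2).const_mul 2).add
            (((hasDerivAt_id u).const_mul 2).sub_const 1)).div (hasDerivAt_id u) hu0.ne')).sub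
        ((hasDerivAt_id u).const_mul 9) |>.add_const 6
    refine HasDerivAt.congr_of_eventuallyEq (h.congr_deriv ?_) (Filter.Eventually.of_forall fun v => ?_)
    · simp only [id, Pi.add_apply, Pi.pow_apply]
      field_simp
      ring
    · simp only [id, Pi.add_apply, Pi.mul_apply, Pi.sub_apply, Pi.div_apply, Pi.pow_apply]
      ring
  · exact fun u hu => H2_nonneg hu

lemma H_nonneg {s : ℝ} (hs : 1 ≤ s) :
    0 ≤ (2 * s ^ 2 + 2 * s - 1) * Real.log s - 9 / 2 * s ^ 2 + 6 * s - 3 / 2 := by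
  apply mono_aux
    (f' := fun u => (4 * u + 2) * Real.log u + (2 * u ^ 2 + 2 * u - 1) / u - 9 * u + 6)
    ?_ ?_ (by norm_num) hs
  · intro u hu
    have hu0 : (0:ℝ) < u := lt_of_lt_of_le one_pos hu
    have h := ((((((hasDerivAt_id u).pow 2).const_mul 2).add
            (((hasDerivAt_id u).const_mul 2).sub_const 1)).mul
          (Real.hasDerivAt_log hu0.ne')).sub
        (((hasDerivAt_id u).pow 2).const_mul (9/2))).add
        ((hasDerivAt_id u).const_mul 6) |>.sub_const (3/2)
    refine HasDerivAt.congr_of_eventuallyEq (h.congr_deriv ?_) (Filter.Eventually.of_forall fun v => ?_)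
    · simp only [id, Pi.add_apply, Pi.pow_apply]
      field_simp
      ring
    · simp only [id, Pi.add_apply, Pi.mul_apply, Pi.sub_apply, Pi.div_apply, Pi.pow_apply]
      ring
  · exact fun u hu => H1_nonneg hu

lemma key (t : ℝ) (ht : 0 < t) :
    1 + (t / (2 * (1 + t))) * (1 + (2/3) * Real.log (1 + t)) ≤ (1/t + 1) * Real.log (1 + t) := by
  have hs : (1:ℝ) ≤ 1 + t := by linarith
  have hH := H_nonneg hs
  rw [← sub_nonneg]
  have h1t : (0:ℝ) < 1 + t := by linarith
  have e : (1/t + 1) * Real.log (1 + t) - (1 + (t / (2 * (1 + t))) * (1 + (2/3) * Real.log (1 + t)))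
      = 2 * ((2 * (1+t) ^ 2 + 2 * (1+t) - 1) * Real.log (1+t) - 9 / 2 * (1+t) ^ 2 + 6 * (1+t) - 3 / 2)
        / (6 * t * (1 + t)) := by
    field_simp
    ring
  rw [e]
  positivity

theorem bennett_exponent_bound (x y B : ℝ) (hx : 0 < x) (hy : 0 < y) (hB : 0 < B) :
    (B / (x * y) + 1) * Real.log (1 + x * y / B)
      ≥ 1 + (x * y / (2 * (x * y + B))) * (1 + (2 / 3) * Real.log (1 + x * y / B)) ∧
    x / y - (x / y) * (B / (x * y) + 1) * Real.log (1 + x * y / B)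
      ≤ -(x ^ 2 / (2 * (x * y + B))) * (1 + (2 / 3) * Real.log (1 + x * y / B)) := by
  have hxy : (0:ℝ) < x * y := mul_pos hx hy
  have ht : (0:ℝ) < x * y / B := div_pos hxy hB
  have hk := key (x * y / B) ht
  have e1 : B / (x * y) + 1 = 1 / (x * y / B) + 1 := by
    field_simp
  have e2 : x * y / (2 * (x * y + B)) = (x * y / B) / (2 * (1 + x * y / B)) := by
    rw [div_eq_div_iff (by positivity) (by positivity)]
    field_simp
    ring
  constructor
  · rw [e1, e2]
    exact hk
  · have h1 : (x / y) * ((B / (x * y) + 1) * Real.log (1 + x * y / B))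
        ≥ (x / y) * (1 + (x * y / (2 * (x * y + B))) * (1 + (2 / 3) * Real.log (1 + x * y / B))) := by
      apply mul_le_mul_of_nonneg_left _ (by positivity)
      rw [e1, e2]
      exact hk
    have e3 : (x / y) * (1 + (x * y / (2 * (x * y + B))) * (1 + (2 / 3) * Real.log (1 + x * y / B)))
        = x / y + (x ^ 2 / (2 * (x * y + B))) * (1 + (2 / 3) * Real.log (1 + x * y / B)) := by
      field_simp
    rw [e3] at h1
    nlinarith [h1]
end
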